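/- arXiv:2412.01381 — 4 statements merged into one kernel-verified Lean document; each statement's English description precedes it below -/
import Mathlib

section
/- Let V be a reflexive real normed space (the canonical inclusion of V into its double dual is surjective). Let Φ : V → ℝ be a convex, lower semicontinuous function with inf_{u∈V} Φ(u) > −∞, and let A : V → V* be a map such that A = −∂Φ, i.e. for all u, v ∈ V one has Φ(v) ≥ Φ(u) − ⟨A(u), v − u⟩. Then there exist constants δ₄ > 0 and C₄ ∈ ℝ such that 2⟨A(u), u⟩ ≤ C₄ − δ₄‖A(u)‖_{V*} for every u ∈ V. -/
/-- If `A = -∂Φ` for a convex, lower semicontinuous, bounded-below functional `Φ`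
on a reflexive real normed space `V`, then there exist `δ₄ > 0` and `C₄ ∈ ℝ` with
`2⟨A(u), u⟩ ≤ C₄ - δ₄‖A(u)‖` for every `u ∈ V`. -/
theorem subgradient_cone_condition
    {V : Type*} [NormedAddCommGroup V] [NormedSpace ℝ V]
    (hrefl : Function.Surjective (NormedSpace.inclusionInDoubleDual ℝ V))
    (Φ : V → ℝ) (hconv : ConvexOn ℝ Set.univ Φ)
    (hlsc : LowerSemicontinuous Φ)
    (hbdd : BddBelow (Set.range Φ))
    (A : V → StrongDual ℝ V)
    (hsub : ∀ u v : V, Φ v ≥ Φ u - A u (v - u)) :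
    ∃ δ₄ : ℝ, 0 < δ₄ ∧ ∃ C₄ : ℝ, ∀ u : V, 2 * A u u ≤ C₄ - δ₄ * ‖A u‖ := by
  -- V is complete, being isometric to its (complete) double dual
  haveI : CompleteSpace V := by
    have h' : Function.Surjective (NormedSpace.inclusionInDoubleDualLi (𝕜 := ℝ) (E := V)) := hrefl
    exact (LinearIsometryEquiv.ofSurjective _ h').toIsometryEquiv.completeSpace
  obtain ⟨m, hm⟩ := hbdd
  have hm' : ∀ x, m ≤ Φ x := fun x => hm ⟨x, rfl⟩
  -- Baire category: some sublevel set has nonempty interior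
  have hcover : ⋃ n : ℕ, {x : V | Φ x ≤ n} = Set.univ := by
    ext x
    simp only [Set.mem_iUnion, Set.mem_setOf_eq, Set.mem_univ, iff_true]
    obtain ⟨n, hn⟩ := exists_nat_ge (Φ x)
    exact ⟨n, hn⟩
  obtain ⟨n, hn⟩ := nonempty_interior_of_iUnion_of_closed
    (fun n : ℕ => hlsc.isClosed_preimage n) hcover
  obtain ⟨x₀, hx₀⟩ := hn
  obtain ⟨δ, hδpos, hδ⟩ := Metric.isOpen_iff.1 isOpen_interior x₀ hx₀
  have hball : ∀ y : V, dist y x₀ < δ → Φ y ≤ n := by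
    intro y hy
    have : y ∈ Φ ⁻¹' Set.Iic (n : ℝ) := interior_subset (hδ hy)
    exact this
  -- Φ is bounded above on the ball of radius δ/2 around 0
  set M : ℝ := (n : ℝ) / 2 + Φ (-x₀) / 2 with hM
  have hbound : ∀ y : V, ‖y‖ < δ / 2 → Φ y ≤ M := by
    intro y hy
    have h1 : Φ (x₀ + (2:ℝ) • y) ≤ n := by
      apply hball
      rw [dist_eq_norm]
      have : x₀ + (2:ℝ) • y - x₀ = (2:ℝ) • y := by abel
      rw [this]
      rw [norm_smul, Real.norm_eq_abs]
      rw [abs_of_pos (by norm_num : (0:ℝ) < 2)]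
      linarith
    have h2 := hconv.2 (Set.mem_univ (x₀ + (2:ℝ) • y)) (Set.mem_univ (-x₀))
      (by norm_num : (0:ℝ) ≤ 1/2) (by norm_num : (0:ℝ) ≤ 1/2) (by norm_num)
    have heq : (1/2 : ℝ) • (x₀ + (2:ℝ) • y) + (1/2 : ℝ) • (-x₀) = y := by
      module
    rw [heq] at h2
    calc Φ y ≤ (1/2) * Φ (x₀ + (2:ℝ) • y) + (1/2) * Φ (-x₀) := by
          simpa [smul_eq_mul] using h2
      _ ≤ (1/2) * n + (1/2) * Φ (-x₀) := by nlinarith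
      _ = M := by rw [hM]; ring
  set t : ℝ := δ / 4 with ht
  have htpos : 0 < t := by positivity
  refine ⟨t, htpos, Φ 0 - m + (M - m), fun u => ?_⟩
  -- the key: for every x, A u x ≤ ((M - m - A u u)/t) * ‖x‖
  set B : ℝ := M - m - A u u with hB
  have hAuu : A u u ≤ Φ 0 - m := by
    have := hsub u 0
    simp only [zero_sub, map_neg] at this
    have h0 := hm' u
    linarith
  have hΦ0 : Φ 0 ≤ M := hbound 0 (by simpa using (by linarith : (0:ℝ) < δ/2))
  have hBnn : 0 ≤ B := by rw [hB]; linarith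
  have hkey : ∀ x : V, A u x ≤ (B / t) * ‖x‖ := by
    intro x
    rcases eq_or_ne x 0 with rfl | hx
    · simp
    · have hxn : 0 < ‖x‖ := norm_pos_iff.2 hx
      set s : ℝ := t / ‖x‖ with hs
      have hspos : 0 < s := by positivity
      have hnorm : ‖-(s • x)‖ < δ / 2 := by
        rw [norm_neg, norm_smul, Real.norm_eq_abs, abs_of_pos hspos, hs]
        rw [div_mul_cancel₀ _ (ne_of_gt hxn)]
        rw [ht]; linarith
      have h1 := hsub u (-(s • x))
      have h2 : Φ (-(s • x)) ≤ M := hbound _ hnorm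
      have h3 : A u (-(s • x) - u) = -(s * A u x) - A u u := by
        rw [map_sub, map_neg, map_smul]
        simp [smul_eq_mul]
      rw [h3] at h1
      have h4 := hm' u
      -- h1 : Φ (-(s•x)) ≥ Φ u - (-(s * A u x) - A u u)
      have h5 : s * A u x ≤ B := by rw [hB]; linarith
      have h6 : A u x ≤ B / s := (le_div_iff₀ hspos).2 (by linarith [h5, mul_comm s (A u x)])
      rw [hs] at h6
      calc A u x ≤ B / (t / ‖x‖) := h6
        _ = (B / t) * ‖x‖ := by field_simp
  have hopnorm : ‖A u‖ ≤ B / t := by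
    apply ContinuousLinearMap.opNorm_le_bound _ (by positivity)
    intro x
    rw [Real.norm_eq_abs, abs_le]
    constructor
    · have := hkey (-x)
      simp only [map_neg, norm_neg] at this
      linarith
    · exact hkey x
  have hfinal : t * ‖A u‖ ≤ B := by
    rw [le_div_iff₀ htpos] at hopnorm
    linarith [mul_comm (‖A u‖) t]
  rw [hB] at hfinal
  linarith
end

section
/- Let V be a reflexive real normed space (the canonical inclusion of V into its double dual is surjective). Let Φ : V → ℝ be convex, lower semicontinuous with inf_{u∈V} Φ(u) > −∞, and let A₀ : V → V* satisfy A₀ = −∂Φ, i.e. Φ(v) ≥ Φ(u) − ⟨A₀(u), v − u⟩ for all u, v ∈ V. Let F : V → V* be any map. Suppose there exist constants κ₁ ∈ ℝ \ {0} and K₁ ∈ ℝ such that ‖F(u)‖_{V*} ≤ κ₁⟨A₀(u), u⟩ + K₁ for every u ∈ V, and constants κ₂, K₂ ∈ ℝ such that 2⟨F(u), u⟩ ≤ κ₂⟨A₀(u), u⟩ + K₂ for every u ∈ V, where additionally κ₂ ∈ (−2, ∞) whenever κ₁ < 0. Then there exist δ₄ > 0 and C₄ ∈ ℝ such that the operator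 A := A₀ + F satisfies 2⟨A(u), u⟩ ≤ C₄ − δ₄‖A(u)‖_{V*} for every u ∈ V. -/
/-- If `A₀ = -∂Φ` for a convex, lower semicontinuous, bounded-below functional `Φ` on a
reflexive real normed space `V`, and `F : V → V*` satisfies
`‖F(u)‖ ≤ κ₁⟨A₀(u),u⟩ + K₁` (with `κ₁ ≠ 0`) and `2⟨F(u),u⟩ ≤ κ₂⟨A₀(u),u⟩ + K₂`
(with `κ₂ > -2` whenever `κ₁ < 0`), then `A := A₀ + F` satisfies the cone
condition `2⟨A(u),u⟩ ≤ C₄ - δ₄‖A(u)‖`. -/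
theorem perturbed_subgradient_cone_condition_coercive_bound
    {V : Type*} [NormedAddCommGroup V] [NormedSpace ℝ V]
    (hrefl : Function.Surjective (NormedSpace.inclusionInDoubleDual ℝ V))
    (Φ : V → ℝ) (hconv : ConvexOn ℝ Set.univ Φ)
    (hlsc : LowerSemicontinuous Φ)
    (hbdd : BddBelow (Set.range Φ))
    (A₀ F : V → StrongDual ℝ V)
    (hsub : ∀ u v : V, Φ v ≥ Φ u - A₀ u (v - u))
    (κ₁ K₁ : ℝ) (hκ₁ : κ₁ ≠ 0)
    (hF1 : ∀ u : V, ‖F u‖ ≤ κ₁ * A₀ u u + K₁)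
    (κ₂ K₂ : ℝ)
    (hF2 : ∀ u : V, 2 * F u u ≤ κ₂ * A₀ u u + K₂)
    (hκ₂ : κ₁ < 0 → -2 < κ₂) :
    ∃ δ₄ : ℝ, 0 < δ₄ ∧ ∃ C₄ : ℝ, ∀ u : V,
      2 * (A₀ u + F u) u ≤ C₄ - δ₄ * ‖A₀ u + F u‖ := by
  classical
  -- V is complete (isometric to its double dual, which is complete)
  have hrefl' : Function.Surjective (NormedSpace.inclusionInDoubleDualLi ℝ (E := V)) := hrefl
  have hcompl : CompleteSpace V :=
    (LinearIsometryEquiv.ofSurjective (NormedSpace.inclusionInDoubleDualLi ℝ (E := V)) hrefl').toIsometryEquiv.completeSpace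
  -- lower bound of Φ
  obtain ⟨m, hm⟩ := hbdd
  have hm' : ∀ u : V, m ≤ Φ u := fun u => hm (Set.mem_range_self u)
  -- ⟨A₀ u, u⟩ ≤ Φ 0 - Φ u
  have ha : ∀ u : V, A₀ u u ≤ Φ 0 - Φ u := by
    intro u
    have h := hsub u 0
    rw [zero_sub, map_neg] at h
    linarith
  -- Baire: Φ is bounded above on some ball
  obtain ⟨ρ, hρ, B', hB'0, hB'⟩ :
      ∃ ρ : ℝ, 0 < ρ ∧ ∃ B' : ℝ, Φ 0 ≤ B' ∧ ∀ z : V, ‖z‖ ≤ ρ → Φ z ≤ B' := by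
    obtain ⟨n, x₀, hx₀⟩ :=
      nonempty_interior_of_iUnion_of_closed
        (f := fun n : ℕ => {x : V | Φ x ≤ n})
        (fun n => hlsc.isClosed_preimage (n : ℝ))
        (by
          ext x
          simp only [Set.mem_iUnion, Set.mem_setOf_eq, Set.mem_univ, iff_true]
          exact ⟨⌈Φ x⌉₊, Nat.le_ceil _⟩)
    obtain ⟨r, hr, hball⟩ := Metric.isOpen_iff.1 isOpen_interior x₀ hx₀
    have hball' : ∀ y : V, ‖y - x₀‖ < r → Φ y ≤ n := by
      intro y hy
      have : y ∈ Metric.ball x₀ r := by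
        rw [Metric.mem_ball, dist_eq_norm]; exact hy
      exact interior_subset (s := {x : V | Φ x ≤ (n : ℝ)}) (hball this)
    refine ⟨r / 4, by linarith, max ((n + Φ (-x₀)) / 2) (Φ 0), le_max_right _ _, ?_⟩
    intro z hz
    have hkey : Φ z ≤ (n + Φ (-x₀)) / 2 := by
      have h1 : Φ (x₀ + (2 : ℝ) • z) ≤ n := by
        apply hball'
        have : x₀ + (2 : ℝ) • z - x₀ = (2 : ℝ) • z := by abel
        rw [this, norm_smul]
        simp only [Real.norm_ofNat]
        linarith
      have h2 := hconv.2 (Set.mem_univ (x₀ + (2 : ℝ) • z)) (Set.mem_univ (-x₀))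
        (by norm_num : (0:ℝ) ≤ 1/2) (by norm_num : (0:ℝ) ≤ 1/2) (by norm_num)
      have h3 : (1/2 : ℝ) • (x₀ + (2 : ℝ) • z) + (1/2 : ℝ) • (-x₀) = z := by
        module
      rw [h3] at h2
      simp only [smul_eq_mul] at h2
      linarith
    exact le_trans hkey (le_max_left _ _)
  set lam : ℝ := ρ⁻¹ with hlam_def
  have hlam : 0 < lam := inv_pos.2 hρ
  -- key operator norm bound
  have hkey : ∀ u : V, ‖A₀ u‖ ≤ lam * (B' - m) - lam * A₀ u u := by
    intro u
    set a : ℝ := A₀ u u with ha_def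
    have hwlow : ∀ w : V, ‖w‖ ≤ 1 → lam * (m - B' + a) ≤ A₀ u w := by
      intro w hw
      have h := hsub u (ρ • w)
      rw [map_sub, map_smul] at h
      have hΦw : Φ (ρ • w) ≤ B' := by
        apply hB'
        rw [norm_smul, Real.norm_eq_abs, abs_of_pos hρ]
        nlinarith
      have hΦu : m ≤ Φ u := hm' u
      have h2 : m - B' + a ≤ ρ • A₀ u w := by
        simp only [smul_eq_mul] at h ⊢
        linarith
      simp only [smul_eq_mul] at h2
      rw [hlam_def]
      rw [inv_mul_le_iff₀ hρ] at *
      nlinarith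
    have habs : ∀ w : V, ‖w‖ = 1 → ‖A₀ u w‖ ≤ lam * (B' - m) - lam * a := by
      intro w hw
      rw [Real.norm_eq_abs, abs_le]
      constructor
      · have := hwlow w (le_of_eq hw)
        nlinarith
      · have := hwlow (-w) (by rw [norm_neg]; exact le_of_eq hw)
        rw [map_neg] at this
        nlinarith
    have hC : 0 ≤ lam * (B' - m) - lam * a := by
      have h1 : a ≤ Φ 0 - m := by
        have := ha u
        have := hm' u
        linarith
      nlinarith
    exact ContinuousLinearMap.opNorm_le_of_unit_norm hC habs
  -- now assemble
  rcases lt_or_gt_of_ne hκ₁ with hneg | hpos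
  · -- κ₁ < 0
    have h2κ₂ : -2 < κ₂ := hκ₂ hneg
    have hlk : (0:ℝ) < lam - κ₁ := by linarith
    refine ⟨(2 + κ₂) / (lam - κ₁), div_pos (by linarith) hlk, K₂ + (2 + κ₂) / (lam - κ₁) * (lam * (B' - m) + K₁), ?_⟩
    intro u
    set δ : ℝ := (2 + κ₂) / (lam - κ₁) with hδ_def
    have hδpos : 0 < δ := div_pos (by linarith) hlk
    have hδeq : δ * (lam - κ₁) = 2 + κ₂ := by
      rw [hδ_def, div_mul_cancel₀ _ hlk.ne']
    set a : ℝ := A₀ u u with ha_def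
    have h1 : ‖A₀ u + F u‖ ≤ ‖A₀ u‖ + ‖F u‖ := norm_add_le _ _
    have h2 : (A₀ u + F u) u = a + F u u := rfl
    have h3 : δ * ‖A₀ u‖ ≤ δ * (lam * (B' - m) - lam * a) :=
      mul_le_mul_of_nonneg_left (hkey u) hδpos.le
    have h4 : δ * ‖F u‖ ≤ δ * (κ₁ * a + K₁) :=
      mul_le_mul_of_nonneg_left (hF1 u) hδpos.le
    have h5 : 2 * F u u ≤ κ₂ * a + K₂ := hF2 u
    have hzero : 2 * a + κ₂ * a + δ * (κ₁ * a) - δ * (lam * a) = 0 := by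
      have : (2 + κ₂ - δ * (lam - κ₁)) * a = 0 := by
        rw [hδeq]; ring_nf
      nlinarith [this]
    have h6 : δ * ‖A₀ u + F u‖ ≤ δ * ‖A₀ u‖ + δ * ‖F u‖ := by
      rw [← mul_add]; exact mul_le_mul_of_nonneg_left h1 hδpos.le
    rw [h2]
    nlinarith [h3, h4, h5, h6, hzero]
  · -- κ₁ > 0
    set L : ℝ := |Φ 0 - m| + |K₁| / κ₁ with hL_def
    set γ : ℝ := 2 + κ₂ + κ₁ - lam with hγ_def
    refine ⟨1, one_pos, |γ| * L + K₂ + lam * (B' - m) + K₁, ?_⟩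
    intro u
    set a : ℝ := A₀ u u with ha_def
    have h1 : ‖A₀ u + F u‖ ≤ ‖A₀ u‖ + ‖F u‖ := norm_add_le _ _
    have h2 : (A₀ u + F u) u = a + F u u := rfl
    have h3 : ‖A₀ u‖ ≤ lam * (B' - m) - lam * a := hkey u
    have h4 : ‖F u‖ ≤ κ₁ * a + K₁ := hF1 u
    have h5 : 2 * F u u ≤ κ₂ * a + K₂ := hF2 u
    have haup : a ≤ Φ 0 - m := by
      have := ha u; have := hm' u; linarith
    have halow : -L ≤ a := by
      by_contra hcon
      push_neg at hcon
      have h0 : (0:ℝ) ≤ κ₁ * a + K₁ := le_trans (norm_nonneg _) h4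
      have hmul : κ₁ * a < κ₁ * -L := mul_lt_mul_of_pos_left hcon hpos
      have hexp : κ₁ * -L = -(κ₁ * |Φ 0 - m|) - |K₁| := by
        rw [hL_def]; field_simp; ring
      linarith [le_abs_self K₁, mul_nonneg hpos.le (abs_nonneg (Φ 0 - m))]
    have habsa : |a| ≤ L := by
      rw [abs_le]
      refine ⟨halow, ?_⟩
      have : Φ 0 - m ≤ |Φ 0 - m| := le_abs_self _
      have : (0:ℝ) ≤ |K₁| / κ₁ := div_nonneg (abs_nonneg K₁) hpos.le
      rw [hL_def]; linarith [le_abs_self (Φ 0 - m), haup]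
    have hγa : γ * a ≤ |γ| * L :=
      calc γ * a ≤ |γ * a| := le_abs_self _
        _ = |γ| * |a| := abs_mul _ _
        _ ≤ |γ| * L := mul_le_mul_of_nonneg_left habsa (abs_nonneg _)
    rw [h2]
    have hγexp : γ * a = 2 * a + κ₂ * a + κ₁ * a - lam * a := by
      rw [hγ_def]; ring
    nlinarith [h1, h3, h4, h5, hγa, hγexp]
end

section
/- Let p ≥ 2 and ν > 0 be real numbers. Then the function f : ℝ → ℝ defined by f(x) = 2ν·( (1 + |x|)^p / p − (1 + |x|)^{p−1} / (p−1) ) is convex on ℝ. -/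
open Set Real

private lemma hasDerivAt_rpow_shift (q : ℝ) {x : ℝ} (hx : (-1 : ℝ) < x) :
    HasDerivAt (fun y : ℝ => (1 + y) ^ q) (q * (1 + x) ^ (q - 1)) x := by
  have h0 : (1 : ℝ) + x ≠ 0 := by linarith
  have h1 : HasDerivAt (fun y : ℝ => (1 + y)) 1 x := by
    simpa using (hasDerivAt_id x).const_add 1
  have h2 := (Real.hasDerivAt_rpow_const (x := 1 + x) (p := q) (Or.inl h0)).comp x h1
  simpa [Function.comp_def] using h2

private lemma G_hasDerivAt (p : ℝ) (hp : 2 ≤ p) {x : ℝ} (hx : (-1 : ℝ) < x) :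
    HasDerivAt (fun y : ℝ => (1 + y) ^ p / p - (1 + y) ^ (p - 1) / (p - 1))
      ((1 + x) ^ (p - 1) - (1 + x) ^ (p - 2)) x := by
  have hp0 : p ≠ 0 := by linarith
  have hp1 : p - 1 ≠ 0 := by linarith
  have h1 := (hasDerivAt_rpow_shift p hx).div_const p
  have h2 := (hasDerivAt_rpow_shift (p - 1) hx).div_const (p - 1)
  have := h1.sub h2
  have e1 : p * (1 + x) ^ (p - 1) / p = (1 + x) ^ (p - 1) := by field_simp
  have e2 : (p - 1) * (1 + x) ^ (p - 1 - 1) / (p - 1) = (1 + x) ^ (p - 2) := by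
    rw [show p - 1 - 1 = p - 2 from by ring, mul_div_assoc, mul_comm, div_mul_cancel₀ _ hp1]
  rw [e1, e2] at this
  exact this

private lemma G'_hasDerivAt (p : ℝ) {x : ℝ} (hx : (-1 : ℝ) < x) :
    HasDerivAt (fun y : ℝ => (1 + y) ^ (p - 1) - (1 + y) ^ (p - 2))
      ((p - 1) * (1 + x) ^ (p - 2) - (p - 2) * (1 + x) ^ (p - 3)) x := by
  have h1 := hasDerivAt_rpow_shift (p - 1) hx
  have h2 := hasDerivAt_rpow_shift (p - 2) hx
  have := h1.sub h2
  have e1 : p - 1 - 1 = p - 2 := by ring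
  have e2 : p - 2 - 1 = p - 3 := by ring
  rw [e1, e2] at this
  exact this

/-- For `p ≥ 2` and `ν > 0`, the function
`x ↦ 2ν·((1+|x|)^p/p − (1+|x|)^(p-1)/(p-1))` is convex on `ℝ`. -/
theorem powerLaw_potential_convex
    (p ν : ℝ) (hp : 2 ≤ p) (hν : 0 < ν) :
    ConvexOn ℝ Set.univ
      (fun x : ℝ => 2 * ν * ((1 + |x|) ^ p / p - (1 + |x|) ^ (p - 1) / (p - 1))) := by
  set G : ℝ → ℝ := fun y => (1 + y) ^ p / p - (1 + y) ^ (p - 1) / (p - 1) with hG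
  set G' : ℝ → ℝ := fun y => (1 + y) ^ (p - 1) - (1 + y) ^ (p - 2) with hG'
  -- deriv G = G' on a neighborhood of Ici 0
  have hderiv : ∀ x : ℝ, (-1 : ℝ) < x → deriv G x = G' x := fun x hx =>
    (G_hasDerivAt p hp hx).deriv
  have hopen : IsOpen (Ioi (-1 : ℝ)) := isOpen_Ioi
  have hdGeq : ∀ x : ℝ, (-1 : ℝ) < x → deriv G =ᶠ[nhds x] G' := by
    intro x hx
    filter_upwards [hopen.mem_nhds hx] with y hy using hderiv y hy
  -- continuity/differentiability of G on Ici 0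
  have hcont : ContinuousOn G (Ici 0) := fun x hx =>
    ((G_hasDerivAt p hp (by simp at hx; linarith)).continuousAt).continuousWithinAt
  have hdiff : DifferentiableOn ℝ G (interior (Ici (0:ℝ))) := by
    intro x hx
    rw [interior_Ici] at hx
    exact ((G_hasDerivAt p hp (by simp at hx; linarith)).differentiableAt).differentiableWithinAt
  have hdiff' : DifferentiableOn ℝ (deriv G) (interior (Ici (0:ℝ))) := by
    intro x hx
    rw [interior_Ici] at hx
    have hx1 : (-1:ℝ) < x := by simp at hx; linarith
    have : DifferentiableAt ℝ G' x := (G'_hasDerivAt p hx1).differentiableAt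
    exact (this.congr_of_eventuallyEq (hdGeq x hx1)).differentiableWithinAt
  have base : ∀ x : ℝ, 0 ≤ x → (1:ℝ) ≤ 1 + x := fun x hx => by linarith
  have hconvG : ConvexOn ℝ (Ici 0) G := by
    apply convexOn_of_deriv2_nonneg (convex_Ici 0) hcont hdiff hdiff'
    intro x hx
    rw [interior_Ici] at hx
    have hx0 : (0:ℝ) < x := hx
    have hx1 : (-1:ℝ) < x := by linarith
    have h2 : deriv (deriv G) x = deriv G' x := (hdGeq x hx1).deriv_eq
    have h3 : deriv G' x = (p - 1) * (1 + x) ^ (p - 2) - (p - 2) * (1 + x) ^ (p - 3) :=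
      (G'_hasDerivAt p hx1).deriv
    have hb : (1:ℝ) ≤ 1 + x := by linarith
    have hle : (1 + x) ^ (p - 3) ≤ (1 + x) ^ (p - 2) :=
      Real.rpow_le_rpow_of_exponent_le hb (by linarith)
    have hp2 : (0:ℝ) ≤ p - 2 := by linarith
    have hnn : (p - 2) * (1 + x) ^ (p - 3) ≤ (p - 1) * (1 + x) ^ (p - 2) := by
      calc (p - 2) * (1 + x) ^ (p - 3) ≤ (p - 2) * (1 + x) ^ (p - 2) := by
            exact mul_le_mul_of_nonneg_left hle hp2
        _ ≤ (p - 1) * (1 + x) ^ (p - 2) := by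
            apply mul_le_mul_of_nonneg_right (by linarith)
            positivity
    show 0 ≤ deriv^[2] G x
    simp only [Function.iterate_succ, Function.iterate_zero, Function.comp_apply, Function.id_def]
    rw [h2, h3]; linarith
  have hmonoG : MonotoneOn G (Ici 0) := by
    apply monotoneOn_of_deriv_nonneg (convex_Ici 0) hcont hdiff
    intro x hx
    rw [interior_Ici] at hx
    have hx1 : (-1:ℝ) < x := by exact lt_trans (by norm_num) hx
    rw [hderiv x hx1]
    have hb : (1:ℝ) ≤ 1 + x := by linarith [le_of_lt (show (0:ℝ) < x from hx)]
    have : (1 + x) ^ (p - 2) ≤ (1 + x) ^ (p - 1) :=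
      Real.rpow_le_rpow_of_exponent_le hb (by linarith)
    simp only [hG']
    linarith
  -- scale by 2ν
  have hc : (0:ℝ) ≤ 2 * ν := by linarith
  have hconvF : ConvexOn ℝ (Ici 0) (fun y => 2 * ν * G y) := by
    simpa [smul_eq_mul] using hconvG.smul hc
  have hmonoF : MonotoneOn (fun y => 2 * ν * G y) (Ici 0) := by
    intro a ha b hb hab
    exact mul_le_mul_of_nonneg_left (hmonoG ha hb hab) hc
  -- range of abs
  have himg : (fun x : ℝ => |x|) '' univ = Ici 0 := by
    ext y
    simp only [image_univ, mem_range, mem_Ici]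
    constructor
    · rintro ⟨x, rfl⟩; exact abs_nonneg x
    · intro hy; exact ⟨y, abs_of_nonneg hy⟩
  have habs : ConvexOn ℝ (univ : Set ℝ) (fun x : ℝ => |x|) := by exact convexOn_univ_norm (E := ℝ)
  have := ConvexOn.comp (f := fun x : ℝ => |x|) (g := fun y => 2 * ν * G y)
    (by rw [himg]; exact hconvF) habs (by rw [himg]; exact hmonoF)
  simpa [Function.comp_def, hG] using this
end

section
/- Let α ≥ 2 and β ≥ 0 be real numbers with α > β + 2, let s > 0 and K ≥ 0, and set c₃ := ((β+2)(α−β−2)/(2(α+β))) · (β+2)^{(α+β)/(α−β−2)} · K^{2(α+β)/(α−β−2)} / (s·(α+β)/(2β+2))^{(2β+2)/(α−β−2)}. Then for every y ≥ 0 one has ((β+2)²/2) · y^{2β+2} · K² ≤ s · ((β+2)/2) · y^{α+β} + c₃. -/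
open Real

/-- General absorption form of Young's inequality:
`A * u ≤ C * u ^ p + A ^ q / (q * (C * p) ^ (q - 1))`. -/
lemma young_absorb {p q A C u : ℝ} (hpq : p.HolderConjugate q) (hA : 0 ≤ A) (hC : 0 < C)
    (hu : 0 ≤ u) : A * u ≤ C * u ^ p + A ^ q / (q * (C * p) ^ (q - 1)) := by
  have hp0 : 0 < p := hpq.pos
  have hq0 : 0 < q := hpq.symm.pos
  have hCp : 0 < C * p := by positivity
  have hqp : q / p = q - 1 := by
    have h := hpq.inv_add_inv_eq_one
    field_simp at h ⊢
    nlinarith [h]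
  set r : ℝ := (C * p) ^ (1 / p) with hr
  have hr0 : 0 < r := rpow_pos_of_pos hCp _
  have hyoung := Real.young_inequality_of_nonneg (mul_nonneg hr0.le hu)
    (div_nonneg hA hr0.le) hpq
  have hxb : r * u * (A / r) = A * u := by field_simp
  have hrp : r ^ p = C * p := by
    rw [hr, ← Real.rpow_mul hCp.le, one_div, inv_mul_cancel₀ hp0.ne', Real.rpow_one]
  have hrq : r ^ q = (C * p) ^ (q - 1) := by
    rw [hr, ← Real.rpow_mul hCp.le, one_div, inv_mul_eq_div, hqp]
  have hxp : (r * u) ^ p = C * p * u ^ p := by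
    rw [Real.mul_rpow hr0.le hu, hrp]
  have hbq : (A / r) ^ q = A ^ q / (C * p) ^ (q - 1) := by
    rw [Real.div_rpow hA hr0.le, hrq]
  rw [hxb, hxp, hbq] at hyoung
  calc A * u ≤ C * p * u ^ p / p + A ^ q / (C * p) ^ (q - 1) / q := hyoung
    _ = C * u ^ p + A ^ q / (q * (C * p) ^ (q - 1)) := by
        field_simp

/-- Quantitative absorption inequality defining `c₃`: for `α ≥ 2`, `β ≥ 0` with
`α > β + 2`, `s > 0`, `K ≥ 0` and
`c₃ := ((β+2)(α−β−2)/(2(α+β)))·(β+2)^((α+β)/(α−β−2))·K^(2(α+β)/(α−β−2)) /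
(s(α+β)/(2β+2))^((2β+2)/(α−β−2))`, one has
`((β+2)²/2)·y^(2β+2)·K² ≤ s·((β+2)/2)·y^(α+β) + c₃` for all `y ≥ 0`. -/
theorem absorption_inequality_c3
    (α β s K : ℝ) (hα : 2 ≤ α) (hβ : 0 ≤ β) (hαβ : β + 2 < α) (hs : 0 < s) (hK : 0 ≤ K) :
    ∀ y ≥ (0 : ℝ),
      (β + 2) ^ 2 / 2 * y ^ (2 * β + 2) * K ^ 2 ≤
        s * ((β + 2) / 2) * y ^ (α + β) +
          (β + 2) * (α - β - 2) / (2 * (α + β)) *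
              (β + 2) ^ ((α + β) / (α - β - 2)) * K ^ (2 * (α + β) / (α - β - 2)) /
            (s * (α + β) / (2 * β + 2)) ^ ((2 * β + 2) / (α - β - 2)) := by
  intro y hy
  have hb2 : (0:ℝ) < 2 * β + 2 := by linarith
  have hd : (0:ℝ) < α - β - 2 := by linarith
  have hab : (0:ℝ) < α + β := by linarith
  set p : ℝ := (α + β) / (2 * β + 2) with hp
  set q : ℝ := (α + β) / (α - β - 2) with hq
  have hpq : p.HolderConjugate q := by
    refine Real.holderConjugate_iff.mpr ⟨?_, ?_⟩
    · rw [hp, lt_div_iff₀ hb2]; linarith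
    · rw [hp, hq]; field_simp; ring
  have hA : (0:ℝ) ≤ (β + 2) ^ 2 / 2 * K ^ 2 := by positivity
  have hC : (0:ℝ) < s * ((β + 2) / 2) := by positivity
  have hu : (0:ℝ) ≤ y ^ (2 * β + 2) := rpow_nonneg hy _
  have h := young_absorb hpq hA hC hu
  have hup : (y ^ (2 * β + 2)) ^ p = y ^ (α + β) := by
    rw [← Real.rpow_mul hy, hp]
    congr 1
    field_simp
  rw [hup] at h
  have hlhs : (β + 2) ^ 2 / 2 * K ^ 2 * y ^ (2 * β + 2)
      = (β + 2) ^ 2 / 2 * y ^ (2 * β + 2) * K ^ 2 := by ring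
  rw [hlhs] at h
  refine h.trans (add_le_add_right (le_of_eq ?_) _)
  -- constant term equality
  have hq1 : q - 1 = (2 * β + 2) / (α - β - 2) := by
    rw [hq]; field_simp; ring
  have hq2 : 2 * q = 2 * (α + β) / (α - β - 2) := by
    rw [hq]; ring
  have hCp : s * ((β + 2) / 2) * p = (β + 2) / 2 * (s * (α + β) / (2 * β + 2)) := by
    rw [hp]; field_simp
  have hqpos : (0:ℝ) < q := hpq.symm.pos
  have hb2pos : (0:ℝ) < (β + 2) := by linarith
  have hD : (0:ℝ) < s * (α + β) / (2 * β + 2) := by positivity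
  have hAq : ((β + 2) ^ 2 / 2 * K ^ 2) ^ q
      = ((β + 2) / 2) ^ q * (β + 2) ^ q * (K ^ 2 : ℝ) ^ q := by
    have e1 : (β + 2) ^ 2 / 2 * K ^ 2 = (β + 2) / 2 * (β + 2) * K ^ 2 := by ring
    rw [e1, Real.mul_rpow (by positivity) (by positivity),
      Real.mul_rpow (by positivity) hb2pos.le]
  have hK2q : (K ^ 2 : ℝ) ^ q = K ^ (2 * q) := by
    rw [← Real.rpow_natCast K 2, ← Real.rpow_mul hK]
    norm_num
  have hCpq : (s * ((β + 2) / 2) * p) ^ (q - 1)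
      = ((β + 2) / 2) ^ (q - 1) * (s * (α + β) / (2 * β + 2)) ^ (q - 1) := by
    rw [hCp, Real.mul_rpow (by positivity) hD.le]
  have hsplit : ((β + 2) / 2) ^ q = ((β + 2) / 2) ^ (q - 1) * ((β + 2) / 2) := by
    rw [← Real.rpow_add_one (by positivity) (q - 1)]
    norm_num
  have hcoef : (β + 2) * (α - β - 2) / (2 * (α + β)) = (β + 2) / 2 / q := by
    rw [hq]; field_simp
  have hhpow : ((β + 2) / 2) ^ (q - 1) ≠ 0 := by positivity
  have hDpow : (s * (α + β) / (2 * β + 2)) ^ (q - 1) ≠ 0 := by positivity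
  rw [hAq, hK2q, hCpq, hsplit, hcoef, ← hq1, ← hq2]
  field_simp
end
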